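/- There exists an absolute constant C > 0 such that, uniformly for all real x, y with 2 ≤ y ≤ x, the number Ψ(x, y) of positive integers n ≤ x having no prime divisor > y satisfies Ψ(x, y) ≤ C · x · e^{-u/2}, where u = (log x)/(log y). -/

import Mathlib

open scoped Classical

noncomputable def psiSet (y : ℝ) (N : ℕ) : Finset ℕ :=
  (Finset.Icc 1 N).filter (fun n => ∀ p : ℕ, p.Prime → p ∣ n → (p : ℝ) ≤ y)

lemma psiSet_card_le (y : ℝ) (N : ℕ) : (psiSet y N).card ≤ N := by
  have h : (psiSet y N).card ≤ (Finset.Icc 1 N).card := Finset.card_filter_le _ _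
  simpa [Nat.card_Icc] using h

lemma card_filter_dvd_le (y : ℝ) (N d : ℕ) (hd : 0 < d) :
    ((psiSet y N).filter (fun n => d ∣ n)).card ≤ (psiSet y (N / d)).card := by
  apply Finset.card_le_card_of_injOn (fun n => n / d)
  · intro n hn
    simp only [psiSet, Finset.mem_coe, Finset.mem_filter, Finset.mem_Icc] at hn ⊢
    obtain ⟨⟨⟨h1, h2⟩, hs⟩, hdvd⟩ := hn
    refine ⟨⟨(Nat.one_le_div_iff hd).mpr (Nat.le_of_dvd h1 hdvd), Nat.div_le_div_right h2⟩, ?_⟩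
    intro p pp hp
    exact hs p pp (hp.trans (Nat.div_dvd_of_dvd hdvd))
  · intro a ha b hb hab
    simp only [Finset.coe_filter, Set.mem_setOf_eq] at ha hb
    obtain ⟨-, hda⟩ := ha; obtain ⟨-, hdb⟩ := hb
    have h1 := Nat.div_mul_cancel hda
    have h2 := Nat.div_mul_cancel hdb
    simp only at hab
    rw [← h1, ← h2, hab]

lemma log_eq_sum (y : ℝ) (N : ℕ) {n : ℕ} (hn : n ∈ psiSet y N) :
    Real.log n = ∑ p ∈ (Finset.range (⌊y⌋₊ + 1)).filter Nat.Prime,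
      ∑ k ∈ Finset.Icc 1 N, (if p ^ k ∣ n then Real.log p else 0) := by
  simp only [psiSet, Finset.mem_filter, Finset.mem_Icc] at hn
  obtain ⟨⟨h1, h2⟩, hs⟩ := hn
  have hn0 : n ≠ 0 := by omega
  have step1 : Real.log n = ∑ p ∈ n.primeFactors, (n.factorization p : ℝ) * Real.log p := by
    conv_lhs => rw [← Nat.factorization_prod_pow_eq_self hn0]
    rw [Finsupp.prod, Nat.support_factorization]
    push_cast
    rw [Real.log_prod]
    · exact Finset.sum_congr rfl fun p _ => by rw [Real.log_pow]
    · intro p hp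
      have pp := Nat.prime_of_mem_primeFactors hp
      exact pow_ne_zero _ (Nat.cast_ne_zero.mpr pp.ne_zero)
  rw [step1]
  have hsub : n.primeFactors ⊆ (Finset.range (⌊y⌋₊ + 1)).filter Nat.Prime := by
    intro p hp
    have pp := Nat.prime_of_mem_primeFactors hp
    have pd := Nat.dvd_of_mem_primeFactors hp
    have : (p : ℝ) ≤ y := hs p pp pd
    simp only [Finset.mem_filter, Finset.mem_range]
    exact ⟨Nat.lt_succ_of_le (Nat.le_floor this), pp⟩
  rw [Finset.sum_subset hsub]
  · apply Finset.sum_congr rfl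
    intro p hp
    have pp : p.Prime := (Finset.mem_filter.mp hp).2
    have hfle : n.factorization p ≤ N := le_trans (Nat.factorization_lt p hn0).le h2
    have hset : (Finset.Icc 1 N).filter (fun k => p ^ k ∣ n) = Finset.Icc 1 (n.factorization p) := by
      ext k
      simp only [Finset.mem_filter, Finset.mem_Icc]
      constructor
      · rintro ⟨⟨hk1, -⟩, hkd⟩
        exact ⟨hk1, (Nat.Prime.pow_dvd_iff_le_factorization pp hn0).mp hkd⟩
      · rintro ⟨hk1, hkf⟩
        exact ⟨⟨hk1, le_trans hkf hfle⟩, (Nat.Prime.pow_dvd_iff_le_factorization pp hn0).mpr hkf⟩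
    rw [← Finset.sum_filter, hset, Finset.sum_const, Nat.card_Icc, nsmul_eq_mul]
    simp
  · intro p hp hnp
    have : n.factorization p = 0 := by
      rwa [← Finsupp.notMem_support_iff, Nat.support_factorization]
    rw [this]
    simp

lemma sum_log_le (y : ℝ) (N : ℕ) :
    ∑ n ∈ psiSet y N, Real.log n ≤
      ∑ p ∈ (Finset.range (⌊y⌋₊ + 1)).filter Nat.Prime, ∑ k ∈ Finset.Icc 1 N,
        Real.log p * (((psiSet y N).filter (fun n => p ^ k ∣ n)).card : ℝ) := by
  have : ∑ n ∈ psiSet y N, Real.log n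
      = ∑ p ∈ (Finset.range (⌊y⌋₊ + 1)).filter Nat.Prime, ∑ k ∈ Finset.Icc 1 N,
          ∑ n ∈ psiSet y N, (if p ^ k ∣ n then Real.log p else 0) := by
    calc ∑ n ∈ psiSet y N, Real.log n
        = ∑ n ∈ psiSet y N, ∑ p ∈ (Finset.range (⌊y⌋₊ + 1)).filter Nat.Prime,
            ∑ k ∈ Finset.Icc 1 N, (if p ^ k ∣ n then Real.log p else 0) :=
          Finset.sum_congr rfl fun n hn => log_eq_sum y N hn
      _ = ∑ p ∈ (Finset.range (⌊y⌋₊ + 1)).filter Nat.Prime, ∑ n ∈ psiSet y N,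
            ∑ k ∈ Finset.Icc 1 N, (if p ^ k ∣ n then Real.log p else 0) := Finset.sum_comm
      _ = _ := Finset.sum_congr rfl fun p _ => Finset.sum_comm
  rw [this]
  apply le_of_eq
  apply Finset.sum_congr rfl; intro p _
  apply Finset.sum_congr rfl; intro k _
  rw [← Finset.sum_filter, Finset.sum_const, nsmul_eq_mul, mul_comm]

lemma theta_le (n : ℕ) :
    ∑ p ∈ (Finset.range (n + 1)).filter Nat.Prime, Real.log p ≤ n * Real.log 4 := by
  have h1 : ∑ p ∈ (Finset.range (n + 1)).filter Nat.Prime, Real.log p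
      = Real.log (primorial n : ℝ) := by
    rw [primorial]
    push_cast
    rw [Real.log_prod]
    intro p hp
    exact Nat.cast_ne_zero.mpr (Finset.mem_filter.mp hp).2.ne_zero
  rw [h1]
  have h2 : (primorial n : ℝ) ≤ (4 : ℝ) ^ n := by
    exact_mod_cast primorial_le_4_pow n
  have h3 : (0 : ℝ) < (primorial n : ℝ) := by
    exact_mod_cast primorial_pos n
  calc Real.log (primorial n : ℝ) ≤ Real.log ((4:ℝ) ^ n) := Real.log_le_log h3 h2
    _ = n * Real.log 4 := by rw [Real.log_pow]

lemma mertens : ∀ n : ℕ,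
    ∑ p ∈ (Finset.range (n + 1)).filter Nat.Prime, Real.log p / p
      ≤ 2 * Real.log 4 * (Real.log n / Real.log 2 + 1) := by
  intro n
  induction n using Nat.strong_induction_on with
  | _ n IH =>
  have h4 : (0:ℝ) ≤ Real.log 4 := Real.log_nonneg (by norm_num)
  have h2pos : (0:ℝ) < Real.log 2 := Real.log_pos (by norm_num)
  rcases le_or_gt n 1 with hn | hn
  · have : (Finset.range (n + 1)).filter Nat.Prime = ∅ := by
      interval_cases n <;> decide
    rw [this]
    simp only [Finset.sum_empty]
    have hln : (0:ℝ) ≤ Real.log n := Real.log_natCast_nonneg n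
    positivity
  · -- n ≥ 2
    set h := n / 2 with hh
    have hh1 : 1 ≤ h := (Nat.one_le_div_iff (by norm_num)).mpr hn
    have hhn : h < n := Nat.div_lt_self (by omega) (by norm_num)
    have hnR : (0:ℝ) < (n:ℝ) := by exact_mod_cast Nat.lt_of_lt_of_le Nat.zero_lt_one hn.le
    set F : ℕ → ℝ := fun p => if p.Prime then Real.log p / p else 0 with hF
    have hFnonneg : ∀ p : ℕ, 0 ≤ F p := by
      intro p
      simp only [hF]
      split
      · have : (0:ℝ) ≤ Real.log p := Real.log_natCast_nonneg p
        positivity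
      · exact le_refl 0
    have hsplit : ∑ p ∈ Finset.range (n + 1), F p
        = ∑ p ∈ Finset.range (h + 1), F p + ∑ p ∈ Finset.Ico (h + 1) (n + 1), F p := by
      rw [Finset.range_eq_Ico, Finset.range_eq_Ico]
      exact (Finset.sum_Ico_consecutive F (show 0 ≤ h + 1 by omega) (show h + 1 ≤ n + 1 by omega)).symm
    have hmain : ∑ p ∈ (Finset.range (n + 1)).filter Nat.Prime, Real.log p / p
        = ∑ p ∈ Finset.range (n + 1), F p := (Finset.sum_filter _ _)
    have hih : ∑ p ∈ Finset.range (h + 1), F p ≤ 2 * Real.log 4 * (Real.log h / Real.log 2 + 1) := by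
      rw [← Finset.sum_filter]
      exact IH h hhn
    have htail : ∑ p ∈ Finset.Ico (h + 1) (n + 1), F p ≤ 2 * Real.log 4 := by
      have step1 : ∑ p ∈ Finset.Ico (h + 1) (n + 1), F p
          ≤ ∑ p ∈ Finset.Ico (h + 1) (n + 1), (if p.Prime then Real.log p * (2 / n) else 0) := by
        apply Finset.sum_le_sum
        intro p hp
        rw [Finset.mem_Ico] at hp
        simp only [hF]
        split
        · have hp0 : (0:ℝ) < (p:ℝ) := by
            have : 1 ≤ p := by omega
            exact_mod_cast this
          have hlp : (0:ℝ) ≤ Real.log p := Real.log_natCast_nonneg p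
          have hpn : (n:ℝ) ≤ 2 * p := by
            have : n ≤ 2 * p := by omega
            exact_mod_cast this
          have key : (1:ℝ)/p ≤ 2/n := by
            rw [div_le_div_iff₀ hp0 hnR]
            linarith
          calc Real.log p / p = Real.log p * (1/p) := by ring
            _ ≤ Real.log p * (2/n) := mul_le_mul_of_nonneg_left key hlp
        · exact le_refl 0
      have step2 : ∑ p ∈ Finset.Ico (h + 1) (n + 1), (if p.Prime then Real.log p * (2 / n) else 0)
          ≤ ∑ p ∈ Finset.range (n + 1), (if p.Prime then Real.log p * (2 / n) else 0) := by
        apply Finset.sum_le_sum_of_subset_of_nonneg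
        · rw [Finset.range_eq_Ico]
          exact Finset.Ico_subset_Ico (by omega) le_rfl
        · intro p _ _
          split
          · have hlp : (0:ℝ) ≤ Real.log p := Real.log_natCast_nonneg p
            positivity
          · exact le_refl 0
      have step3 : ∑ p ∈ Finset.range (n + 1), (if p.Prime then Real.log p * (2 / n) else 0)
          ≤ 2 * Real.log 4 := by
        rw [← Finset.sum_filter, ← Finset.sum_mul]
        calc (∑ p ∈ (Finset.range (n+1)).filter Nat.Prime, Real.log p) * (2/(n:ℝ))
            ≤ ((n:ℝ) * Real.log 4) * (2/(n:ℝ)) :=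
              mul_le_mul_of_nonneg_right (theta_le n) (by positivity)
          _ = 2 * Real.log 4 := by field_simp
      linarith
    rw [hmain, hsplit]
    have hcast : Real.log 2 + Real.log h ≤ Real.log n := by
      have h2h : ((2*h : ℕ):ℝ) ≤ (n:ℝ) := by exact_mod_cast (by omega : 2*h ≤ n)
      have hpos : (0:ℝ) < ((2*h:ℕ):ℝ) := by exact_mod_cast (by omega : 0 < 2*h)
      have hlog := Real.log_le_log hpos h2h
      rwa [show ((2*h:ℕ):ℝ) = 2 * (h:ℝ) by push_cast; ring,
        Real.log_mul (by norm_num) (Nat.cast_ne_zero.mpr (by omega))] at hlog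
    have key : Real.log h / Real.log 2 + 1 ≤ Real.log n / Real.log 2 := by
      have e1 : Real.log (h:ℕ) / Real.log 2 + 1 = (Real.log (h:ℕ) + Real.log 2)/Real.log 2 := by
        field_simp
      rw [e1]
      exact (div_le_div_iff_of_pos_right h2pos).mpr (by linarith)
    have hm := mul_le_mul_of_nonneg_left key (by positivity : (0:ℝ) ≤ 2*Real.log 4)
    nlinarith [hm, hih, htail]

lemma pow_rpow_neg {p : ℝ} (hp : 0 ≤ p) (s : ℝ) (k : ℕ) : (p ^ k) ^ (-s) = (p ^ (-s)) ^ k := by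
  rw [← Real.rpow_natCast p k, ← Real.rpow_mul hp,
    show (k:ℝ) * (-s) = (-s) * (k:ℝ) from mul_comm _ _, Real.rpow_mul hp, Real.rpow_natCast]

lemma geom_aux {q : ℝ} (h0 : 0 ≤ q) (h34 : q ≤ 3/4) (N : ℕ) :
    ∑ k ∈ Finset.Icc 1 N, q ^ k ≤ 4 * q := by
  have h1 : q < 1 := lt_of_le_of_lt h34 (by norm_num)
  have hq1 : q ≠ 1 := ne_of_lt h1
  have key : ∑ k ∈ Finset.Icc 1 N, q ^ k = (q ^ (N+1) - q ^ 1) / (q - 1) := by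
    rw [← Finset.Ico_add_one_right_eq_Icc]
    exact geom_sum_Ico hq1 (by omega)
  rw [key]
  rw [div_le_iff_of_neg (by linarith : q - 1 < 0)]
  have hpow : 0 ≤ q ^ (N+1) := pow_nonneg h0 _
  have hpow' : q ^ (N+1) ≤ 1 := pow_le_one₀ h0 h1.le
  nlinarith

lemma exp_half_le_two : Real.exp (1/2) ≤ 2 := by
  have hh : Real.exp (1/2) * Real.exp (1/2) = Real.exp 1 := by
    rw [← Real.exp_add]; norm_num
  nlinarith [Real.exp_pos (1/2), Real.exp_one_lt_d9]

lemma log_four_le_two : Real.log 4 ≤ 2 := by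
  rw [Real.log_le_iff_le_exp (by norm_num)]
  have hh : Real.exp 1 * Real.exp 1 = Real.exp 2 := by
    rw [← Real.exp_add]; norm_num
  nlinarith [Real.exp_one_gt_d9]

lemma sqrt2_ge : (4:ℝ)/3 ≤ (2:ℝ) ^ ((1:ℝ)/2) := by
  rw [← Real.sqrt_eq_rpow]
  rw [Real.le_sqrt (by norm_num) (by norm_num)]
  norm_num

set_option maxHeartbeats 1000000 in
lemma main3 (y : ℝ) (hy : 3 ≤ y) (N : ℕ) :
    ((psiSet y N).card : ℝ) ≤ Real.exp 400 * (N:ℝ) ^ (1 - 1/(2*Real.log y)) := by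
  have hy0 : (0:ℝ) < y := by linarith
  have hly1 : (1:ℝ) ≤ Real.log y := by
    rw [Real.le_log_iff_exp_le hy0]
    calc Real.exp 1 ≤ 2.7182818286 := Real.exp_one_lt_d9.le
      _ ≤ 3 := by norm_num
      _ ≤ y := hy
  have hly0 : (0:ℝ) < Real.log y := by linarith
  have hδpos : 0 < 1/(2*Real.log y) := by positivity
  have hδhalf : 1/(2*Real.log y) ≤ 1/2 := by
    rw [div_le_div_iff₀ (by positivity) (by norm_num)]
    linarith
  set δ : ℝ := 1/(2*Real.log y) with hδ
  have hs2 : (1:ℝ)/2 ≤ 1 - δ := by linarith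
  have hδly : δ * Real.log y = 1/2 := by
    rw [hδ]; field_simp
  have hC2 : (2:ℝ) ≤ Real.exp 400 := by
    have := Real.exp_one_gt_d9
    have h2 : Real.exp 1 ≤ Real.exp 400 := Real.exp_le_exp.mpr (by norm_num)
    linarith
  induction N using Nat.strong_induction_on with
  | _ N IH =>
  rcases Nat.eq_zero_or_pos N with h0 | hN1
  · subst h0
    simp only [psiSet, Finset.Icc_self, Nat.cast_zero]
    rw [Real.zero_rpow (by linarith : 1 - δ ≠ 0)]
    simp [Finset.Icc_eq_empty_of_lt]
  · have hN1R : (1:ℝ) ≤ (N:ℝ) := by exact_mod_cast hN1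
    have hNpos : (0:ℝ) < (N:ℝ) := by linarith
    have hNs_nonneg : (0:ℝ) ≤ (N:ℝ) ^ (1 - δ) := Real.rpow_nonneg hNpos.le _
    rcases le_or_gt (Real.log N) (768 * Real.log y) with hsmall | hbig
    · -- trivial regime
      have hcard : ((psiSet y N).card : ℝ) ≤ (N:ℝ) := by
        exact_mod_cast psiSet_card_le y N
      have hsplit : (N:ℝ) = (N:ℝ)^(1-δ) * (N:ℝ)^δ := by
        rw [← Real.rpow_add hNpos, sub_add_cancel, Real.rpow_one]
      have hNδ : (N:ℝ)^δ ≤ Real.exp 400 := by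
        rw [Real.rpow_def_of_pos hNpos]
        apply Real.exp_le_exp.mpr
        calc Real.log N * δ ≤ (768 * Real.log y) * δ :=
              mul_le_mul_of_nonneg_right hsmall hδpos.le
          _ = 768 * (δ * Real.log y) := by ring
          _ = 384 := by rw [hδly]; norm_num
          _ ≤ 400 := by norm_num
      calc ((psiSet y N).card : ℝ) ≤ (N:ℝ) := hcard
        _ = (N:ℝ)^(1-δ) * (N:ℝ)^δ := hsplit
        _ ≤ (N:ℝ)^(1-δ) * Real.exp 400 := mul_le_mul_of_nonneg_left hNδ hNs_nonneg
        _ = Real.exp 400 * (N:ℝ)^(1-δ) := mul_comm _ _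
    · -- main regime
      have hlogN : (0:ℝ) < Real.log N := by nlinarith
      set S := psiSet y N with hS
      set C := Real.exp 400 with hCdef
      have hCpos : (0:ℝ) < C := Real.exp_pos _
      -- lower bound for the log-sum
      have hlow : ((S.card : ℝ) - Real.sqrt N) * (Real.log N / 2) ≤ ∑ n ∈ S, Real.log n := by
        have hcompl : ((S.filter (fun n : ℕ => ¬ Real.sqrt N < (n:ℝ))).card : ℝ) ≤ Real.sqrt N := by
          have hsub : S.filter (fun n : ℕ => ¬ Real.sqrt N < (n:ℝ)) ⊆ Finset.Icc 1 ⌊Real.sqrt N⌋₊ := by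
            intro n hn
            rw [Finset.mem_filter] at hn
            obtain ⟨hnS, hnle⟩ := hn
            push_neg at hnle
            have h1 : 1 ≤ n := (Finset.mem_Icc.mp (Finset.mem_filter.mp hnS).1).1
            exact Finset.mem_Icc.mpr ⟨h1, Nat.le_floor hnle⟩
          calc ((S.filter (fun n : ℕ => ¬ Real.sqrt N < (n:ℝ))).card : ℝ)
              ≤ ((Finset.Icc 1 ⌊Real.sqrt N⌋₊).card : ℝ) := by
                exact_mod_cast Finset.card_le_card hsub
            _ = (⌊Real.sqrt N⌋₊ : ℝ) := by rw [Nat.card_Icc]; simp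
            _ ≤ Real.sqrt N := Nat.floor_le (Real.sqrt_nonneg _)
        set T := S.filter (fun n : ℕ => Real.sqrt N < (n:ℝ)) with hT
        have hcards : (T.card : ℝ) + ((S.filter (fun n : ℕ => ¬ Real.sqrt N < (n:ℝ))).card : ℝ)
            = (S.card : ℝ) := by
          exact_mod_cast Finset.card_filter_add_card_filter_not
            (p := fun n : ℕ => Real.sqrt N < (n:ℝ))
        have hTcard : (S.card : ℝ) - Real.sqrt N ≤ (T.card : ℝ) := by linarith
        have hsum1 : (T.card : ℝ) * (Real.log N / 2) ≤ ∑ n ∈ T, Real.log n := by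
          have : ∀ n ∈ T, Real.log N / 2 ≤ Real.log n := by
            intro n hn
            rw [hT, Finset.mem_filter] at hn
            have hsq : (0:ℝ) < Real.sqrt N := Real.sqrt_pos.mpr hNpos
            calc Real.log N / 2 = Real.log (Real.sqrt N) := (Real.log_sqrt hNpos.le).symm
              _ ≤ Real.log n := Real.log_le_log hsq hn.2.le
          have h := Finset.card_nsmul_le_sum T _ _ this
          rwa [nsmul_eq_mul] at h
        have hsum2 : ∑ n ∈ T, Real.log n ≤ ∑ n ∈ S, Real.log n := by
          apply Finset.sum_le_sum_of_subset_of_nonneg (Finset.filter_subset _ _)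
          intro n _ _
          exact Real.log_natCast_nonneg n
        calc ((S.card : ℝ) - Real.sqrt N) * (Real.log N / 2)
            ≤ (T.card : ℝ) * (Real.log N / 2) :=
              mul_le_mul_of_nonneg_right hTcard (by positivity)
          _ ≤ ∑ n ∈ T, Real.log n := hsum1
          _ ≤ ∑ n ∈ S, Real.log n := hsum2
      set P := (Finset.range (⌊y⌋₊ + 1)).filter Nat.Prime with hP
      have hterm : ∀ p ∈ P, ∑ k ∈ Finset.Icc 1 N,
          Real.log p * (((psiSet y N).filter (fun n => p ^ k ∣ n)).card : ℝ)
          ≤ C * (N:ℝ)^(1-δ) * (Real.log p * (8 / p)) := by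
        intro p hp
        rw [hP, Finset.mem_filter, Finset.mem_range] at hp
        obtain ⟨hplt, hpp⟩ := hp
        have hp2 : (2:ℕ) ≤ p := hpp.two_le
        have hp2R : (2:ℝ) ≤ (p:ℝ) := by exact_mod_cast hp2
        have hp0R : (0:ℝ) < (p:ℝ) := by linarith
        have hlp0 : (0:ℝ) ≤ Real.log p := Real.log_natCast_nonneg p
        have hpy : (p:ℝ) ≤ y := by
          have h1 : (p:ℝ) ≤ (⌊y⌋₊ : ℝ) := by exact_mod_cast Nat.lt_succ_iff.mp hplt
          exact h1.trans (Nat.floor_le hy0.le)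
        set q : ℝ := (p:ℝ) ^ (-(1-δ)) with hq
        have hq0 : (0:ℝ) ≤ q := Real.rpow_nonneg hp0R.le _
        have hq34 : q ≤ 3/4 := by
          have h1 : (4:ℝ)/3 ≤ (p:ℝ)^(1-δ) := by
            calc (4:ℝ)/3 ≤ (2:ℝ) ^ ((1:ℝ)/2) := sqrt2_ge
              _ ≤ (2:ℝ) ^ (1-δ) := Real.rpow_le_rpow_of_exponent_le (by norm_num) hs2
              _ ≤ (p:ℝ) ^ (1-δ) := Real.rpow_le_rpow (by norm_num) hp2R (by linarith)
          rw [hq, Real.rpow_neg hp0R.le]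
          calc ((p:ℝ)^(1-δ))⁻¹ ≤ ((4:ℝ)/3)⁻¹ :=
                inv_anti₀ (by norm_num) h1
            _ = 3/4 := by norm_num
        have hq2p : q ≤ 2 / p := by
          have e1 : q = (p:ℝ)^δ * ((p:ℝ))⁻¹ := by
            rw [hq, show -(1-δ) = δ + (-1) by ring, Real.rpow_add hp0R, Real.rpow_neg_one]
          have h2 : (p:ℝ)^δ ≤ 2 := by
            calc (p:ℝ)^δ ≤ y^δ := Real.rpow_le_rpow hp0R.le hpy hδpos.le
              _ = Real.exp (1/2) := by
                rw [Real.rpow_def_of_pos hy0, mul_comm, hδly]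
              _ ≤ 2 := exp_half_le_two
          rw [e1, div_eq_mul_inv]
          exact mul_le_mul_of_nonneg_right h2 (by positivity)
        have hcard : ∀ k ∈ Finset.Icc 1 N, (((psiSet y N).filter (fun n => p ^ k ∣ n)).card : ℝ)
            ≤ C * ((N:ℝ)^(1-δ) * q^k) := by
          intro k hk
          rw [Finset.mem_Icc] at hk
          have hpk1 : 1 < p ^ k := Nat.one_lt_pow (by omega) (by omega)
          have hdiv_lt : N / p ^ k < N := Nat.div_lt_self hN1 hpk1
          have h1 : (((psiSet y N).filter (fun n => p ^ k ∣ n)).card : ℝ)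
              ≤ ((psiSet y (N / p ^ k)).card : ℝ) := by
            exact_mod_cast card_filter_dvd_le y N (p^k) (by omega)
          have h2 := IH (N / p ^ k) hdiv_lt
          have h3 : ((N / p ^ k : ℕ) : ℝ) ≤ (N:ℝ) / ((p^k : ℕ):ℝ) := Nat.cast_div_le
          have hpk0R : (0:ℝ) < ((p^k:ℕ):ℝ) := by
            exact_mod_cast Nat.lt_of_lt_of_le Nat.zero_lt_one hpk1.le
          have h4 : ((N / p ^ k : ℕ) : ℝ)^(1-δ) ≤ ((N:ℝ) / ((p^k:ℕ):ℝ))^(1-δ) :=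
            Real.rpow_le_rpow (Nat.cast_nonneg _) h3 (by linarith)
          have h5 : ((N:ℝ) / ((p^k:ℕ):ℝ))^(1-δ) = (N:ℝ)^(1-δ) * q^k := by
            rw [Real.div_rpow hNpos.le hpk0R.le, div_eq_mul_inv, ← Real.rpow_neg hpk0R.le]
            congr 1
            rw [Nat.cast_pow]
            exact pow_rpow_neg hp0R.le (1-δ) k
          calc (((psiSet y N).filter (fun n => p ^ k ∣ n)).card : ℝ)
              ≤ ((psiSet y (N / p ^ k)).card : ℝ) := h1
            _ ≤ C * ((N / p ^ k : ℕ) : ℝ)^(1-δ) := h2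
            _ ≤ C * ((N:ℝ)^(1-δ) * q^k) := by
                rw [← h5]
                exact mul_le_mul_of_nonneg_left h4 hCpos.le
        have hgeo : ∑ k ∈ Finset.Icc 1 N, q^k ≤ 4*q := geom_aux hq0 hq34 N
        have hnn3 : (0:ℝ) ≤ Real.log p * C * (N:ℝ)^(1-δ) :=
          mul_nonneg (mul_nonneg hlp0 hCpos.le) hNs_nonneg
        calc ∑ k ∈ Finset.Icc 1 N,
            Real.log p * (((psiSet y N).filter (fun n => p ^ k ∣ n)).card : ℝ)
            ≤ ∑ k ∈ Finset.Icc 1 N, Real.log p * (C * ((N:ℝ)^(1-δ) * q^k)) := by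
              apply Finset.sum_le_sum
              intro k hk
              exact mul_le_mul_of_nonneg_left (hcard k hk) hlp0
          _ = Real.log p * C * (N:ℝ)^(1-δ) * ∑ k ∈ Finset.Icc 1 N, q^k := by
              rw [Finset.mul_sum]
              exact Finset.sum_congr rfl fun k _ => by ring
          _ ≤ Real.log p * C * (N:ℝ)^(1-δ) * (4*q) :=
              mul_le_mul_of_nonneg_left hgeo hnn3
          _ ≤ Real.log p * C * (N:ℝ)^(1-δ) * (8/p) := by
              apply mul_le_mul_of_nonneg_left _ hnn3
              rw [show (8:ℝ)/p = 4 * (2/p) by ring]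
              linarith
          _ = C * (N:ℝ)^(1-δ) * (Real.log p * (8 / p)) := by ring
      have hupper : ∑ p ∈ P, ∑ k ∈ Finset.Icc 1 N,
          Real.log p * (((psiSet y N).filter (fun n => p ^ k ∣ n)).card : ℝ)
          ≤ C * (N:ℝ)^(1-δ) * (96 * Real.log y) := by
        have hm := mertens ⌊y⌋₊
        have hfl3 : (3:ℕ) ≤ ⌊y⌋₊ := Nat.le_floor (by exact_mod_cast hy)
        have hfl1 : (1:ℝ) ≤ (⌊y⌋₊:ℝ) := by
          have : (1:ℕ) ≤ ⌊y⌋₊ := by omega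
          exact_mod_cast this
        have hlfl : Real.log (⌊y⌋₊:ℝ) ≤ Real.log y :=
          Real.log_le_log (by linarith) (Nat.floor_le hy0.le)
        have hl2 : (1:ℝ)/2 ≤ Real.log 2 := by
          have := Real.log_two_gt_d9; linarith
        have hl2pos : (0:ℝ) < Real.log 2 := by linarith
        have hA0 : (0:ℝ) ≤ Real.log (⌊y⌋₊:ℝ) / Real.log 2 :=
          div_nonneg (Real.log_natCast_nonneg _) hl2pos.le
        have h1 : Real.log (⌊y⌋₊:ℝ) / Real.log 2 ≤ 2 * Real.log y := by
          rw [div_le_iff₀ hl2pos]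
          nlinarith [Real.log_natCast_nonneg ⌊y⌋₊]
        have h4 : Real.log 4 ≤ 2 := log_four_le_two
        have h40 : (0:ℝ) ≤ Real.log 4 := Real.log_nonneg (by norm_num)
        have h2 : 2 * Real.log 4 * (Real.log (⌊y⌋₊:ℝ) / Real.log 2 + 1) ≤ 12 * Real.log y := by
          have e1 : 2 * Real.log 4 * (Real.log (⌊y⌋₊:ℝ) / Real.log 2 + 1)
              ≤ 4 * (Real.log (⌊y⌋₊:ℝ) / Real.log 2 + 1) :=
            mul_le_mul_of_nonneg_right (by linarith) (by linarith)
          have e2 : 4 * (Real.log (⌊y⌋₊:ℝ) / Real.log 2 + 1) ≤ 4 * (3 * Real.log y) := by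
            have : Real.log (⌊y⌋₊:ℝ) / Real.log 2 + 1 ≤ 3 * Real.log y := by linarith
            linarith
          linarith
        have hsum12 : ∑ p ∈ P, Real.log p / p ≤ 12 * Real.log y := le_trans hm h2
        calc ∑ p ∈ P, ∑ k ∈ Finset.Icc 1 N,
            Real.log p * (((psiSet y N).filter (fun n => p ^ k ∣ n)).card : ℝ)
            ≤ ∑ p ∈ P, C * (N:ℝ)^(1-δ) * (Real.log p * (8/p)) := Finset.sum_le_sum hterm
          _ = C * (N:ℝ)^(1-δ) * (8 * ∑ p ∈ P, Real.log p / p) := by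
              rw [Finset.mul_sum, Finset.mul_sum]
              exact Finset.sum_congr rfl fun p _ => by ring
          _ ≤ C * (N:ℝ)^(1-δ) * (96 * Real.log y) := by
              apply mul_le_mul_of_nonneg_left _ (by positivity)
              linarith
      have hAA : ((S.card : ℝ) - Real.sqrt N) * (Real.log N / 2)
          ≤ C * (N:ℝ)^(1-δ) * (96 * Real.log y) :=
        le_trans hlow (le_trans (sum_log_le y N) hupper)
      have hL2 : (0:ℝ) < Real.log N / 2 := by linarith
      have hdiv : (S.card : ℝ) - Real.sqrt N
          ≤ (C * (N:ℝ)^(1-δ) * (96 * Real.log y)) / (Real.log N / 2) :=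
        (le_div_iff₀ hL2).mpr hAA
      have hquot : (C * (N:ℝ)^(1-δ) * (96 * Real.log y)) / (Real.log N / 2)
          ≤ C * (N:ℝ)^(1-δ) / 4 := by
        rw [div_le_div_iff₀ hL2 (by norm_num)]
        have hnn : (0:ℝ) ≤ C * (N:ℝ)^(1-δ) := by positivity
        nlinarith [mul_le_mul_of_nonneg_left
          (show 384 * Real.log y ≤ Real.log N / 2 by linarith) hnn]
      have hsqrtN : Real.sqrt N ≤ (N:ℝ)^(1-δ) := by
        rw [Real.sqrt_eq_rpow]
        exact Real.rpow_le_rpow_of_exponent_le hN1R hs2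
      have hfin : (N:ℝ)^(1-δ) + C * (N:ℝ)^(1-δ)/4 ≤ C * (N:ℝ)^(1-δ) := by
        nlinarith [mul_nonneg hNs_nonneg (by linarith : (0:ℝ) ≤ C - 1 - C/4)]
      linarith

lemma pow_two_of_smooth {y : ℝ} (hy : y < 3) : ∀ n : ℕ, 1 ≤ n →
    (∀ p : ℕ, p.Prime → p ∣ n → (p:ℝ) ≤ y) → ∃ k : ℕ, n = 2 ^ k := by
  intro n
  induction n using Nat.strong_induction_on with
  | _ n IH =>
  intro h1 hsm
  rcases eq_or_lt_of_le h1 with h | h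
  · exact ⟨0, h.symm⟩
  · have hn1 : n ≠ 1 := by omega
    have hp : n.minFac.Prime := Nat.minFac_prime hn1
    have hd : n.minFac ∣ n := Nat.minFac_dvd n
    have hle : (n.minFac : ℝ) ≤ y := hsm _ hp hd
    have h2 : n.minFac = 2 := by
      have h2le := hp.two_le
      have hlt3 : n.minFac < 3 := by exact_mod_cast lt_of_le_of_lt hle hy
      omega
    have hdvd2 : (2:ℕ) ∣ n := h2 ▸ hd
    have hm : n / 2 < n := Nat.div_lt_self (by omega) (by norm_num)
    have hm1 : 1 ≤ n / 2 :=
      (Nat.one_le_div_iff (by norm_num)).mpr (Nat.le_of_dvd (by omega) hdvd2)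
    obtain ⟨k, hk⟩ := IH (n/2) hm hm1
      (fun p pp pd => hsm p pp (pd.trans (Nat.div_dvd_of_dvd hdvd2)))
    refine ⟨k+1, ?_⟩
    rw [pow_succ, ← hk, Nat.div_mul_cancel hdvd2]

lemma card_small_y {y : ℝ} (hy3 : y < 3) (N : ℕ) :
    ((psiSet y N).card : ℝ) ≤ Real.log N / Real.log 2 + 1 := by
  have hl2 : (0:ℝ) < Real.log 2 := Real.log_pos (by norm_num)
  rcases Nat.eq_zero_or_pos N with h0 | hN
  · subst h0
    simp only [psiSet, Finset.Icc_self]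
    have : Finset.Icc 1 0 = (∅ : Finset ℕ) := by simp
    rw [this]
    simp only [Finset.filter_empty, Finset.card_empty, Nat.cast_zero]
    positivity
  · have hsub : psiSet y N ⊆ (Finset.range (Nat.log 2 N + 1)).image (2 ^ ·) := by
      intro n hn
      simp only [psiSet, Finset.mem_filter, Finset.mem_Icc] at hn
      obtain ⟨⟨h1, h2⟩, hsm⟩ := hn
      obtain ⟨k, hk⟩ := pow_two_of_smooth hy3 n h1 hsm
      rw [Finset.mem_image]
      refine ⟨k, ?_, hk.symm⟩
      rw [Finset.mem_range, Nat.lt_succ_iff]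
      apply Nat.le_log_of_pow_le (by norm_num)
      omega
    have hcard : (psiSet y N).card ≤ Nat.log 2 N + 1 := by
      calc (psiSet y N).card ≤ _ := Finset.card_le_card hsub
        _ ≤ (Finset.range (Nat.log 2 N + 1)).card := Finset.card_image_le
        _ = Nat.log 2 N + 1 := Finset.card_range _
    have hlogle : (Nat.log 2 N : ℝ) * Real.log 2 ≤ Real.log N := by
      have hpow : (2:ℕ) ^ Nat.log 2 N ≤ N := Nat.pow_log_le_self 2 (by omega)
      have hpowR : ((2:ℝ)) ^ Nat.log 2 N ≤ (N:ℝ) := by exact_mod_cast hpow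
      calc (Nat.log 2 N : ℝ) * Real.log 2 = Real.log ((2:ℝ) ^ Nat.log 2 N) :=
            (Real.log_pow _ _).symm
        _ ≤ Real.log N := Real.log_le_log (by positivity) hpowR
    have h1 : ((psiSet y N).card : ℝ) ≤ (Nat.log 2 N : ℝ) + 1 := by exact_mod_cast hcard
    have h2 : (Nat.log 2 N : ℝ) ≤ Real.log N / Real.log 2 := by
      rw [le_div_iff₀ hl2]
      exact hlogle
    linarith

/-- `Ψ(x,y) ≪ x e^{-u/2}`, `u = log x / log y`, uniformly for `2 ≤ y ≤ x`, where
`Ψ(x,y)` is the number of positive integers `n ≤ x` free of prime divisors `> y`. -/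
theorem Psi_upper_bound :
    ∃ C : ℝ, 0 < C ∧ ∀ x y : ℝ, 2 ≤ y → y ≤ x →
      (((Finset.Icc 1 ⌊x⌋₊).filter
          (fun n => ∀ p : ℕ, p.Prime → p ∣ n → (p : ℝ) ≤ y)).card : ℝ) ≤
        C * x * Real.exp (-(Real.log x / Real.log y) / 2) := by
  refine ⟨Real.exp 400, Real.exp_pos _, ?_⟩
  intro x y hy2 hyx
  have hx2 : (2:ℝ) ≤ x := le_trans hy2 hyx
  have hx0 : (0:ℝ) < x := by linarith
  have hE : (0:ℝ) < Real.exp 400 := Real.exp_pos _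
  have hfloor_eq : ((Finset.Icc 1 ⌊x⌋₊).filter
      (fun n => ∀ p : ℕ, p.Prime → p ∣ n → (p : ℝ) ≤ y)) = psiSet y ⌊x⌋₊ := rfl
  rw [hfloor_eq]
  have hlx0 : (0:ℝ) ≤ Real.log x := Real.log_nonneg (by linarith)
  have hly0 : (0:ℝ) < Real.log y := Real.log_pos (by linarith)
  have hl2 : (0:ℝ) < Real.log 2 := Real.log_pos (by norm_num)
  rcases le_or_gt 3 y with h3 | h3
  · -- y ≥ 3
    have h := main3 y h3 ⌊x⌋₊
    have hfl : ((⌊x⌋₊:ℕ):ℝ) ≤ x := Nat.floor_le hx0.le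
    have hδ2 : 1/(2*Real.log y) ≤ 1/2 := by
      have h1 : (1:ℝ) ≤ Real.log y := by
        rw [Real.le_log_iff_exp_le (by linarith)]
        calc Real.exp 1 ≤ 2.7182818286 := Real.exp_one_lt_d9.le
          _ ≤ 3 := by norm_num
          _ ≤ y := h3
      rw [div_le_div_iff₀ (by positivity) (by norm_num)]
      linarith
    have h2 : ((⌊x⌋₊:ℕ):ℝ) ^ (1 - 1/(2*Real.log y)) ≤ x ^ (1 - 1/(2*Real.log y)) :=
      Real.rpow_le_rpow (Nat.cast_nonneg _) hfl (by linarith)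
    have h3x : x ^ (1 - 1/(2*Real.log y)) = x * Real.exp (-(Real.log x / Real.log y)/2) := by
      rw [Real.rpow_def_of_pos hx0,
        show Real.log x * (1 - 1/(2*Real.log y))
          = Real.log x + -(Real.log x / Real.log y)/2 by field_simp; ring,
        Real.exp_add, Real.exp_log hx0]
    calc ((psiSet y ⌊x⌋₊).card : ℝ)
        ≤ Real.exp 400 * ((⌊x⌋₊:ℕ):ℝ) ^ (1 - 1/(2*Real.log y)) := h
      _ ≤ Real.exp 400 * x ^ (1 - 1/(2*Real.log y)) :=
          mul_le_mul_of_nonneg_left h2 hE.le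
      _ = Real.exp 400 * x * Real.exp (-(Real.log x / Real.log y)/2) := by
          rw [h3x]; ring
  · -- 2 ≤ y < 3
    have hcard := card_small_y h3 ⌊x⌋₊
    have hflx : Real.log (⌊x⌋₊:ℝ) ≤ Real.log x := by
      rcases Nat.eq_zero_or_pos ⌊x⌋₊ with h0 | hp
      · rw [h0]; simpa using hlx0
      · exact Real.log_le_log (by exact_mod_cast hp) (Nat.floor_le hx0.le)
    have step1 : ((psiSet y ⌊x⌋₊).card : ℝ) ≤ Real.log x / Real.log 2 + 1 := by
      have : Real.log (⌊x⌋₊:ℝ) / Real.log 2 ≤ Real.log x / Real.log 2 := by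
        rw [div_le_div_iff₀ hl2 hl2]; exact mul_le_mul_of_nonneg_right hflx hl2.le
      linarith
    have hlog2_23 : (2:ℝ)/3 ≤ Real.log 2 := by
      have := Real.log_two_gt_d9; linarith
    have hxq : (1:ℝ) ≤ x ^ ((1:ℝ)/4) := by
      calc (1:ℝ) = (1:ℝ) ^ ((1:ℝ)/4) := (Real.one_rpow _).symm
        _ ≤ x ^ ((1:ℝ)/4) := Real.rpow_le_rpow (by norm_num) (by linarith) (by norm_num)
    have hlogx : Real.log x ≤ 4 * x ^ ((1:ℝ)/4) := by
      have h := Real.log_le_sub_one_of_pos (show (0:ℝ) < x ^ ((1:ℝ)/4) by positivity)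
      have hlog : Real.log (x ^ ((1:ℝ)/4)) = Real.log x / 4 := by
        rw [Real.log_rpow hx0]; ring
      rw [hlog] at h
      linarith
    have step2 : Real.log x / Real.log 2 + 1 ≤ 9 * x ^ ((1:ℝ)/4) := by
      have h1 : Real.log x / Real.log 2 ≤ Real.log x * (3/2) := by
        rw [div_le_iff₀ hl2]
        nlinarith
      nlinarith
    have key : (9:ℝ) * x ^ ((1:ℝ)/4) ≤ Real.exp 400 * x * Real.exp (-(Real.log x / Real.log y)/2) := by
      have hly2 : Real.log 2 ≤ Real.log y := Real.log_le_log (by norm_num) hy2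
      have hu : -(Real.log x/(2*Real.log 2)) ≤ -(Real.log x / Real.log y)/2 := by
        have hdd : Real.log x / Real.log y ≤ Real.log x / Real.log 2 := by
          rw [div_le_div_iff₀ hly0 hl2]
          exact mul_le_mul_of_nonneg_left hly2 hlx0
        have e : Real.log x/(2*Real.log 2) = (Real.log x/Real.log 2)/2 := by ring
        linarith
      have hx14 : x ^ ((1:ℝ)/4) ≤ x * Real.exp (-(Real.log x/(2*Real.log 2))) := by
        have e1 : x * Real.exp (-(Real.log x/(2*Real.log 2)))
            = Real.exp (Real.log x * (1 - 1/(2*Real.log 2))) := by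
          rw [show Real.log x * (1 - 1/(2*Real.log 2))
            = Real.log x + -(Real.log x/(2*Real.log 2)) by field_simp; ring,
            Real.exp_add, Real.exp_log hx0]
        rw [e1, Real.rpow_def_of_pos hx0]
        apply Real.exp_le_exp.mpr
        have h1 : 1/(2*Real.log 2) ≤ 3/4 := by
          rw [div_le_div_iff₀ (by positivity) (by norm_num)]
          linarith
        have : Real.log x * ((1:ℝ)/4) ≤ Real.log x * (1 - 1/(2*Real.log 2)) :=
          mul_le_mul_of_nonneg_left (by linarith) hlx0
        calc Real.log x * ((1:ℝ)/4) ≤ _ := this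
          _ = _ := rfl
      have hexp9 : (9:ℝ) ≤ Real.exp 400 := by
        have := Real.add_one_le_exp (400:ℝ); linarith
      calc (9:ℝ) * x ^ ((1:ℝ)/4)
          ≤ Real.exp 400 * x ^ ((1:ℝ)/4) :=
            mul_le_mul_of_nonneg_right hexp9 (by positivity)
        _ ≤ Real.exp 400 * (x * Real.exp (-(Real.log x/(2*Real.log 2)))) :=
            mul_le_mul_of_nonneg_left hx14 hE.le
        _ ≤ Real.exp 400 * (x * Real.exp (-(Real.log x / Real.log y)/2)) := by
            apply mul_le_mul_of_nonneg_left _ hE.le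
            exact mul_le_mul_of_nonneg_left (Real.exp_le_exp.mpr hu) hx0.le
        _ = Real.exp 400 * x * Real.exp (-(Real.log x / Real.log y)/2) := by ring
    linarith
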